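/- Preservation (subject reduction) for the ATM type system: if Γ ⊢_ATM c : ρ and c → c', then Γ ⊢_ATM c' : ρ. -/

import Mathlib

namespace LEH

/-! ## Syntax of λEH (finitary PCF with effect handlers), extended with records,
    in de Bruijn representation.  A handler is represented by its return clause
    (one binder) and, for each operation name `o : ℕ`, an operation clause
    (two binders: the parameter `x` at index 1 and the continuation `k` at index 0). -/

mutual
inductive Val : Type
| var (n : ℕ)
| unit
| tt
| ff
| lam (c : Comp)
| fix (v : Val)              -- rec x = v
| record (f : ℕ → Val)
inductive Comp : Type
| ret (v : Val)
| op (o : ℕ) (v : Val)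
| app (v₁ v₂ : Val)
| ite (v : Val) (c₁ c₂ : Comp)
| letin (c₁ c₂ : Comp)
| handle (hret : Comp) (hops : ℕ → Comp) (c : Comp)
| proj (v : Val) (l : ℕ)
end

def liftR (ξ : ℕ → ℕ) : ℕ → ℕ
| 0 => 0
| n+1 => ξ n + 1

mutual
def renameV (ξ : ℕ → ℕ) : Val → Val
| .var n => .var (ξ n)
| .unit => .unit
| .tt => .tt
| .ff => .ff
| .lam c => .lam (renameC (liftR ξ) c)
| .fix v => .fix (renameV (liftR ξ) v)
| .record f => .record (fun o => renameV ξ (f o))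
def renameC (ξ : ℕ → ℕ) : Comp → Comp
| .ret v => .ret (renameV ξ v)
| .op o v => .op o (renameV ξ v)
| .app v₁ v₂ => .app (renameV ξ v₁) (renameV ξ v₂)
| .ite v c₁ c₂ => .ite (renameV ξ v) (renameC ξ c₁) (renameC ξ c₂)
| .letin c₁ c₂ => .letin (renameC ξ c₁) (renameC (liftR ξ) c₂)
| .handle r ops c =>
    .handle (renameC (liftR ξ) r) (fun o => renameC (liftR (liftR ξ)) (ops o)) (renameC ξ c)
| .proj v l => .proj (renameV ξ v) l
end

def liftS (σ : ℕ → Val) : ℕ → Val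
| 0 => .var 0
| n+1 => renameV Nat.succ (σ n)

mutual
def substV (σ : ℕ → Val) : Val → Val
| .var n => σ n
| .unit => .unit
| .tt => .tt
| .ff => .ff
| .lam c => .lam (substC (liftS σ) c)
| .fix v => .fix (substV (liftS σ) v)
| .record f => .record (fun o => substV σ (f o))
def substC (σ : ℕ → Val) : Comp → Comp
| .ret v => .ret (substV σ v)
| .op o v => .op o (substV σ v)
| .app v₁ v₂ => .app (substV σ v₁) (substV σ v₂)
| .ite v c₁ c₂ => .ite (substV σ v) (substC σ c₁) (substC σ c₂)
| .letin c₁ c₂ => .letin (substC σ c₁) (substC (liftS σ) c₂)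
| .handle r ops c =>
    .handle (substC (liftS σ) r) (fun o => substC (liftS (liftS σ)) (ops o)) (substC σ c)
| .proj v l => .proj (substV σ v) l
end

/-- substitution of a single value for de Bruijn index 0 -/
def sub1 (v : Val) : ℕ → Val
| 0 => v
| n+1 => .var n

/-- substitution of two values: index 1 ↦ `x` (operation parameter),
    index 0 ↦ `k` (captured continuation) -/
def sub2 (x k : Val) : ℕ → Val
| 0 => k
| 1 => x
| n+2 => .var n

def subst1C (c : Comp) (v : Val) : Comp := substC (sub1 v) c
def subst1V (w : Val) (v : Val) : Val := substV (sub1 v) w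

/-! ## Evaluation contexts and small-step operational semantics -/

inductive EC : Type
| hole
| letE (E : EC) (c : Comp)

def plug : EC → Comp → Comp
| .hole, c => c
| .letE E c₂, c => .letin (plug E c) c₂

def renameE (ξ : ℕ → ℕ) : EC → EC
| .hole => .hole
| .letE E c => .letE (renameE ξ E) (renameC (liftR ξ) c)

/-- the captured delimited continuation `λ y. with h handle E[return y]` -/
def contOf (r : Comp) (ops : ℕ → Comp) (E : EC) : Val :=
  .lam (.handle (renameC (liftR Nat.succ) r)
    (fun o => renameC (liftR (liftR Nat.succ)) (ops o))
    (plug (renameE Nat.succ E) (.ret (.var 0))))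

inductive Step : Comp → Comp → Prop
| letc {c₁ c₂ c} : Step c₁ c₂ → Step (.letin c₁ c) (.letin c₂ c)
| letret {v c} : Step (.letin (.ret v) c) (subst1C c v)
| lamapp {c v} : Step (.app (.lam c) v) (subst1C c v)
| fixapp {v v'} : Step (.app (.fix v) v') (.app (subst1V v (.fix v)) v')
| iftrue {c₁ c₂} : Step (.ite .tt c₁ c₂) c₁
| iffalse {c₁ c₂} : Step (.ite .ff c₁ c₂) c₂
| han {r ops c c'} : Step c c' → Step (.handle r ops c) (.handle r ops c')
| hret {r ops v} : Step (.handle r ops (.ret v)) (subst1C r v)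
| hop {r ops E o v} :
    Step (.handle r ops (plug E (.op o v)))
      (substC (sub2 v (contOf r ops E)) (ops o))
| projr {f l} : Step (.proj (.record f) l) (.ret (f l))

abbrev StepStar : Comp → Comp → Prop := Relation.ReflTransGen Step
abbrev StepPlus : Comp → Comp → Prop := Relation.TransGen Step

/-! ## ATM types and subtyping -/

mutual
inductive VTy : Type
| unit
| bool
| arrow (τ : VTy) (ρ : CTy)
inductive CTy : Type
| pure (τ : VTy)
| eff (τ : VTy) (ρ₁ ρ₂ : CTy)
end

mutual
inductive SubV : VTy → VTy → Prop
| unit : SubV .unit .unit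
| bool : SubV .bool .bool
| arrow {τ₁ τ₂ ρ₁ ρ₂} : SubV τ₂ τ₁ → SubC ρ₁ ρ₂ → SubV (.arrow τ₁ ρ₁) (.arrow τ₂ ρ₂)
inductive SubC : CTy → CTy → Prop
| pure {τ₁ τ₂} : SubV τ₁ τ₂ → SubC (.pure τ₁) (.pure τ₂)
| ipure {τ₁ τ₂ ρ₁ ρ₂ ρ₁' ρ₂'} :
    SubV τ₁ τ₂ → SubC ρ₂ ρ₁ → SubC ρ₁' ρ₂' → SubC (.eff τ₁ ρ₁ ρ₁') (.eff τ₂ ρ₂ ρ₂')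
| embed {τ₁ τ₂ ρ₁ ρ₂} : SubV τ₁ τ₂ → SubC ρ₁ ρ₂ → SubC (.pure τ₁) (.eff τ₂ ρ₁ ρ₂)
end

/-- An operation signature Σ: each operation `o` has type
    `arg o → res o / ans1 o ⇒ ans2 o`. -/
structure Sig where
  arg : ℕ → VTy
  res : ℕ → VTy
  ans1 : ℕ → CTy
  ans2 : ℕ → CTy

/-! ## The ATM type system ⊢_ATM -/

mutual
inductive TV : Sig → List VTy → Val → VTy → Prop
| unit {S Γ} : TV S Γ .unit .unit
| tt {S Γ} : TV S Γ .tt .bool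
| ff {S Γ} : TV S Γ .ff .bool
| var {S Γ n τ} : Γ[n]? = some τ → TV S Γ (.var n) τ
| lam {S Γ τ c ρ} : TC S (τ :: Γ) c ρ → TV S Γ (.lam c) (.arrow τ ρ)
| fix {S Γ τ v} : TV S (τ :: Γ) v τ → TV S Γ (.fix v) τ
| vsub {S Γ v τ τ'} : TV S Γ v τ → SubV τ τ' → TV S Γ v τ'
inductive TC : Sig → List VTy → Comp → CTy → Prop
| ret {S Γ v τ} : TV S Γ v τ → TC S Γ (.ret v) (.pure τ)
| app {S Γ v₁ v₂ τ ρ} : TV S Γ v₁ (.arrow τ ρ) → TV S Γ v₂ τ → TC S Γ (.app v₁ v₂) ρ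
| ite {S Γ v c₁ c₂ ρ} :
    TV S Γ v .bool → TC S Γ c₁ ρ → TC S Γ c₂ ρ → TC S Γ (.ite v c₁ c₂) ρ
| letP {S Γ c₁ c₂ τ₁ τ₂} :
    TC S Γ c₁ (.pure τ₁) → TC S (τ₁ :: Γ) c₂ (.pure τ₂) →
    TC S Γ (.letin c₁ c₂) (.pure τ₂)
| letIp {S Γ c₁ c₂ τ₁ τ₂ ρ₁ ρ₁' ρ₂} :
    TC S Γ c₁ (.eff τ₁ ρ₁ ρ₁') → TC S (τ₁ :: Γ) c₂ (.eff τ₂ ρ₂ ρ₁) →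
    TC S Γ (.letin c₁ c₂) (.eff τ₂ ρ₂ ρ₁')
| op {S Γ o v} : TV S Γ v (S.arg o) → TC S Γ (.op o v) (.eff (S.res o) (S.ans1 o) (S.ans2 o))
| handle {S Γ r ops c τ ρ ρ'} :
    (∀ o, TC S (.arrow (S.res o) (S.ans1 o) :: S.arg o :: Γ) (ops o) (S.ans2 o)) →
    TC S (τ :: Γ) r ρ →
    TC S Γ c (.eff τ ρ ρ') →
    TC S Γ (.handle r ops c) ρ'
| csub {S Γ c ρ ρ'} : TC S Γ c ρ → SubC ρ ρ' → TC S Γ c ρ'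
end

/-! ## Simple types and the simple type system ⊢_ST (on λEH with records).
    `STy.sig` is the record type `⟦Σ⟧`; the system is parametrized by an
    interpretation `I : ℕ → STy` of its fields and by an operation
    signature `SS`. -/

inductive STy : Type
| unit
| bool
| arrow (σ₁ σ₂ : STy)
| sig

structure SigS where
  arg : ℕ → STy
  res : ℕ → STy

mutual
inductive SV : (ℕ → STy) → SigS → List STy → Val → STy → Prop
| unit {I SS Γ} : SV I SS Γ .unit .unit
| tt {I SS Γ} : SV I SS Γ .tt .bool
| ff {I SS Γ} : SV I SS Γ .ff .bool
| var {I SS Γ n σ} : Γ[n]? = some σ → SV I SS Γ (.var n) σ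
| lam {I SS Γ σ c σ'} : SC I SS (σ :: Γ) c σ' → SV I SS Γ (.lam c) (.arrow σ σ')
| fix {I SS Γ σ v} : SV I SS (σ :: Γ) v σ → SV I SS Γ (.fix v) σ
| record {I SS Γ f} : (∀ o, SV I SS Γ (f o) (I o)) → SV I SS Γ (.record f) .sig
inductive SC : (ℕ → STy) → SigS → List STy → Comp → STy → Prop
| ret {I SS Γ v σ} : SV I SS Γ v σ → SC I SS Γ (.ret v) σ
| app {I SS Γ v₁ v₂ σ σ'} :
    SV I SS Γ v₁ (.arrow σ σ') → SV I SS Γ v₂ σ → SC I SS Γ (.app v₁ v₂) σ'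
| ite {I SS Γ v c₁ c₂ σ} :
    SV I SS Γ v .bool → SC I SS Γ c₁ σ → SC I SS Γ c₂ σ → SC I SS Γ (.ite v c₁ c₂) σ
| letin {I SS Γ c₁ c₂ σ σ'} :
    SC I SS Γ c₁ σ → SC I SS (σ :: Γ) c₂ σ' → SC I SS Γ (.letin c₁ c₂) σ'
| op {I SS Γ o v} : SV I SS Γ v (SS.arg o) → SC I SS Γ (.op o v) (SS.res o)
| handle {I SS Γ r ops c σ σ'} :
    SC I SS (σ :: Γ) r σ' →
    (∀ o, SC I SS (.arrow (SS.res o) σ' :: SS.arg o :: Γ) (ops o) σ') →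
    SC I SS Γ c σ →
    SC I SS Γ (.handle r ops c) σ'
| proj {I SS Γ v l} : SV I SS Γ v .sig → SC I SS Γ (.proj v l) (I l)
end

/-! ## Derivation trees (Type-valued) for subtyping and ATM typing,
    used by the typing-derivation-directed CPS transformation -/

mutual
inductive SubVD : VTy → VTy → Type
| unit : SubVD .unit .unit
| bool : SubVD .bool .bool
| arrow {τ₁ τ₂ ρ₁ ρ₂} : SubVD τ₂ τ₁ → SubCD ρ₁ ρ₂ → SubVD (.arrow τ₁ ρ₁) (.arrow τ₂ ρ₂)
inductive SubCD : CTy → CTy → Type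
| pure {τ₁ τ₂} : SubVD τ₁ τ₂ → SubCD (.pure τ₁) (.pure τ₂)
| ipure {τ₁ τ₂ ρ₁ ρ₂ ρ₁' ρ₂'} :
    SubVD τ₁ τ₂ → SubCD ρ₂ ρ₁ → SubCD ρ₁' ρ₂' → SubCD (.eff τ₁ ρ₁ ρ₁') (.eff τ₂ ρ₂ ρ₂')
| embed {τ₁ τ₂ ρ₁ ρ₂} : SubVD τ₁ τ₂ → SubCD ρ₁ ρ₂ → SubCD (.pure τ₁) (.eff τ₂ ρ₁ ρ₂)
end

mutual
inductive TVD : Sig → List VTy → Val → VTy → Type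
| unit {S Γ} : TVD S Γ .unit .unit
| tt {S Γ} : TVD S Γ .tt .bool
| ff {S Γ} : TVD S Γ .ff .bool
| var {S Γ τ} (n : ℕ) : Γ[n]? = some τ → TVD S Γ (.var n) τ
| lam {S Γ τ c ρ} : TCD S (τ :: Γ) c ρ → TVD S Γ (.lam c) (.arrow τ ρ)
| fix {S Γ τ v} : TVD S (τ :: Γ) v τ → TVD S Γ (.fix v) τ
| vsub {S Γ v τ τ'} : TVD S Γ v τ → SubVD τ τ' → TVD S Γ v τ'
inductive TCD : Sig → List VTy → Comp → CTy → Type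
| ret {S Γ v τ} : TVD S Γ v τ → TCD S Γ (.ret v) (.pure τ)
| app {S Γ v₁ v₂ τ ρ} : TVD S Γ v₁ (.arrow τ ρ) → TVD S Γ v₂ τ → TCD S Γ (.app v₁ v₂) ρ
| ite {S Γ v c₁ c₂ ρ} :
    TVD S Γ v .bool → TCD S Γ c₁ ρ → TCD S Γ c₂ ρ → TCD S Γ (.ite v c₁ c₂) ρ
| letP {S Γ c₁ c₂ τ₁ τ₂} :
    TCD S Γ c₁ (.pure τ₁) → TCD S (τ₁ :: Γ) c₂ (.pure τ₂) →
    TCD S Γ (.letin c₁ c₂) (.pure τ₂)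
| letIp {S Γ c₁ c₂ τ₁ τ₂ ρ₁ ρ₁' ρ₂} :
    TCD S Γ c₁ (.eff τ₁ ρ₁ ρ₁') → TCD S (τ₁ :: Γ) c₂ (.eff τ₂ ρ₂ ρ₁) →
    TCD S Γ (.letin c₁ c₂) (.eff τ₂ ρ₂ ρ₁')
| op {S Γ} (o : ℕ) {v} :
    TVD S Γ v (S.arg o) → TCD S Γ (.op o v) (.eff (S.res o) (S.ans1 o) (S.ans2 o))
| handle {S Γ r ops c τ ρ ρ'} :
    (∀ o, TCD S (.arrow (S.res o) (S.ans1 o) :: S.arg o :: Γ) (ops o) (S.ans2 o)) →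
    TCD S (τ :: Γ) r ρ →
    TCD S Γ c (.eff τ ρ ρ') →
    TCD S Γ (.handle r ops c) ρ'
| csub {S Γ c ρ ρ'} : TCD S Γ c ρ → SubCD ρ ρ' → TCD S Γ c ρ'
end

/-! ## The CPS transformation -/

/-! CPS transformation of ATM value and computation types into simple types;
    `⟦τ/ρ₁⇒ρ₂⟧ = ⟦Σ⟧ → (⟦τ⟧ → ⟦ρ₁⟧) → ⟦ρ₂⟧`, where `⟦Σ⟧` is `STy.sig`. -/
mutual
def cpsT : VTy → STy
| .unit => .unit
| .bool => .bool
| .arrow τ ρ => .arrow (cpsT τ) (cpsCT ρ)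
def cpsCT : CTy → STy
| .pure τ => cpsT τ
| .eff τ ρ₁ ρ₂ => .arrow .sig (.arrow (.arrow (cpsT τ) (cpsCT ρ₁)) (cpsCT ρ₂))
end

/-- the field types of the record type `⟦Σ⟧` -/
def opSTy (S : Sig) : ℕ → STy := fun o =>
  .arrow (cpsT (S.arg o)) (.arrow (.arrow (cpsT (S.res o)) (cpsCT (S.ans1 o))) (cpsCT (S.ans2 o)))

/-- application of a computation to a computation (left-to-right sequencing sugar) -/
def apc (c₁ c₂ : Comp) : Comp :=
  .letin c₁ (.letin (renameC Nat.succ c₂) (.app (.var 1) (.var 0)))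

/-! CPS transformation of subtyping derivations, given as the coercion
    they induce on (already-transformed) terms; the static applications `@`
    of the paper are performed on the fly. -/
mutual
def coerceV : {τ τ' : VTy} → SubVD τ τ' → Val → Val
| _, _, .unit, v => v
| _, _, .bool, v => v
| _, _, .arrow d21 d12, f =>
    .lam (coerceC d12 (.app (renameV Nat.succ f) (coerceV d21 (.var 0))))
def coerceC : {ρ ρ' : CTy} → SubCD ρ ρ' → Comp → Comp
| _, _, .pure d, c => .letin c (.ret (coerceV d (.var 0)))
| _, _, .ipure dT d21 d12, c =>
    .ret (.lam (.ret (.lam (coerceC d12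
      (apc (apc (renameC (fun n => n + 2) c) (.ret (.var 1)))
        (.ret (.lam (coerceC d21 (apc (.ret (.var 1)) (.ret (coerceV dT (.var 0))))))))))))
| _, _, .embed dT dR, c =>
    .ret (.lam (.ret (.lam (coerceC dR
      (.letin (renameC (fun n => n + 2) c)
        (apc (.ret (.var 1)) (.ret (coerceV dT (.var 0)))))))))
end

/-! the typing-derivation-directed CPS transformation -/
mutual
def cpsV {S : Sig} : {Γ : List VTy} → {v : Val} → {τ : VTy} → TVD S Γ v τ → Val
| _, _, _, .unit => .unit
| _, _, _, .tt => .tt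
| _, _, _, .ff => .ff
| _, _, _, .var n _ => .var n
| _, _, _, .lam D => .lam (cpsC D)
| _, _, _, .fix D => .fix (cpsV D)
| _, _, _, .vsub D d => coerceV d (cpsV D)
def cpsC {S : Sig} : {Γ : List VTy} → {c : Comp} → {ρ : CTy} → TCD S Γ c ρ → Comp
| _, _, _, .ret D => .ret (cpsV D)
| _, _, _, .app D₁ D₂ => .app (cpsV D₁) (cpsV D₂)
| _, _, _, .ite Dv D₁ D₂ => .ite (cpsV Dv) (cpsC D₁) (cpsC D₂)
| _, _, _, .letP D₁ D₂ => .letin (cpsC D₁) (cpsC D₂)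
| _, _, _, .letIp D₁ D₂ =>
    .ret (.lam (.ret (.lam (apc (apc (renameC (fun n => n + 2) (cpsC D₁)) (.ret (.var 1)))
      (.ret (.lam (apc (apc (renameC (liftR (fun n => n + 2)) (cpsC D₂)) (.ret (.var 2)))
        (.ret (.var 1)))))))))
| _, _, _, .op o Dv =>
    .ret (.lam (.ret (.lam (apc (apc (.proj (.var 1) o)
      (.ret (renameV (fun n => n + 2) (cpsV Dv)))) (.ret (.var 0))))))
| _, _, _, .handle Dops Dret Dc =>
    apc (apc (cpsC Dc) (.ret (.record (fun o => .lam (.ret (.lam (cpsC (Dops o))))))))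
      (.ret (.lam (cpsC Dret)))
| _, _, _, .csub D d => coerceC d (cpsC D)
end

/-- `⟦D⟧ v_h v_k`: applying a CPS-transformed effectful computation to a
    (translated) handler record and continuation -/
def capp2 (c : Comp) (vh vk : Val) : Comp := apc (apc c (.ret vh)) (.ret vk)

/-! ## Effect-handler-freeness and rec-freeness -/

mutual
def hfV : Val → Prop
| .var _ => True
| .unit => True
| .tt => True
| .ff => True
| .lam c => hfC c
| .fix v => hfV v
| .record f => ∀ o, hfV (f o)
def hfC : Comp → Prop
| .ret v => hfV v
| .op _ _ => False
| .app v₁ v₂ => hfV v₁ ∧ hfV v₂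
| .ite v c₁ c₂ => hfV v ∧ hfC c₁ ∧ hfC c₂
| .letin c₁ c₂ => hfC c₁ ∧ hfC c₂
| .handle _ _ _ => False
| .proj v _ => hfV v
end

mutual
def recFreeV : Val → Prop
| .var _ => True
| .unit => True
| .tt => True
| .ff => True
| .lam c => recFreeC c
| .fix _ => False
| .record f => ∀ o, recFreeV (f o)
def recFreeC : Comp → Prop
| .ret v => recFreeV v
| .op _ v => recFreeV v
| .app v₁ v₂ => recFreeV v₁ ∧ recFreeV v₂
| .ite v c₁ c₂ => recFreeV v ∧ recFreeC c₁ ∧ recFreeC c₂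
| .letin c₁ c₂ => recFreeC c₁ ∧ recFreeC c₂
| .handle r ops c => recFreeC r ∧ (∀ o, recFreeC (ops o)) ∧ recFreeC c
| .proj v _ => recFreeV v
end

end LEH

namespace LEH
/-! ## Auxiliary lemmas for preservation -/

mutual
theorem subV_refl : ∀ τ, SubV τ τ
| .unit => .unit
| .bool => .bool
| .arrow τ ρ => .arrow (subV_refl τ) (subC_refl ρ)
theorem subC_refl : ∀ ρ, SubC ρ ρ
| .pure τ => .pure (subV_refl τ)
| .eff τ ρ₁ ρ₂ => .ipure (subV_refl τ) (subC_refl ρ₁) (subC_refl ρ₂)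
end

mutual
theorem subV_trans {a b c : VTy} (h₁ : SubV a b) (h₂ : SubV b c) : SubV a c := by
  cases h₁ with
  | unit => exact h₂
  | bool => exact h₂
  | arrow d e =>
    cases h₂ with
    | arrow d' e' => exact .arrow (subV_trans d' d) (subC_trans e e')
termination_by sizeOf b
theorem subC_trans {a b c : CTy} (h₁ : SubC a b) (h₂ : SubC b c) : SubC a c := by
  cases h₁ with
  | pure d =>
    cases h₂ with
    | pure d' => exact .pure (subV_trans d d')
    | embed d' e' => exact .embed (subV_trans d d') e'
  | ipure d e f =>
    cases h₂ with
    | ipure d' e' f' => exact .ipure (subV_trans d d') (subC_trans e' e) (subC_trans f f')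
  | embed d e =>
    cases h₂ with
    | ipure d' e' f' => exact .embed (subV_trans d d') (subC_trans e' (subC_trans e f'))
termination_by sizeOf b
end

def RnOK (ξ : ℕ → ℕ) (Γ Δ : List VTy) : Prop :=
  ∀ n τ, Γ[n]? = some τ → Δ[ξ n]? = some τ

theorem RnOK.lift {ξ Γ Δ τ} (h : RnOK ξ Γ Δ) : RnOK (liftR ξ) (τ::Γ) (τ::Δ) := by
  intro n σ hn
  cases n with
  | zero => simpa [liftR] using hn
  | succ n => simpa [liftR] using h n σ (by simpa using hn)

theorem RnOK.succ {Γ : List VTy} {τ} : RnOK Nat.succ Γ (τ::Γ) :=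
  fun n σ h => by simpa using h


theorem tv_rename {S Γ v τ} (h : TV S Γ v τ) :
    ∀ ξ Δ, RnOK ξ Γ Δ → TV S Δ (renameV ξ v) τ := by
  refine TV.rec (motive_1 := fun Γ v τ _ => ∀ ξ Δ, RnOK ξ Γ Δ → TV S Δ (renameV ξ v) τ)
    (motive_2 := fun Γ c ρ _ => ∀ ξ Δ, RnOK ξ Γ Δ → TC S Δ (renameC ξ c) ρ)
    ?unit ?tt ?ff ?var ?lam ?fix ?vsub ?ret ?app ?ite ?letP ?letIp ?op ?handle ?csub h
  case unit => intro Γ ξ Δ hξ; simp only [renameV]; exact TV.unit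
  case tt => intro Γ ξ Δ hξ; simp only [renameV]; exact TV.tt
  case ff => intro Γ ξ Δ hξ; simp only [renameV]; exact TV.ff
  case var => intro Γ n τ hn ξ Δ hξ; simp only [renameV]; exact TV.var (hξ _ _ hn)
  case lam => intro Γ τ c ρ _ ih ξ Δ hξ; simp only [renameV]; exact TV.lam (ih _ _ hξ.lift)
  case fix => intro Γ τ v _ ih ξ Δ hξ; simp only [renameV]; exact TV.fix (ih _ _ hξ.lift)
  case vsub => intro Γ v τ τ' _ s ih ξ Δ hξ; exact TV.vsub (ih _ _ hξ) s
  case ret => intro Γ v τ _ ih ξ Δ hξ; simp only [renameC]; exact TC.ret (ih _ _ hξ)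
  case app => intro Γ v₁ v₂ τ ρ _ _ ih1 ih2 ξ Δ hξ; simp only [renameC]; exact TC.app (ih1 _ _ hξ) (ih2 _ _ hξ)
  case ite => intro Γ v c₁ c₂ ρ _ _ _ ihv ih1 ih2 ξ Δ hξ; simp only [renameC]; exact TC.ite (ihv _ _ hξ) (ih1 _ _ hξ) (ih2 _ _ hξ)
  case letP => intro Γ c₁ c₂ τ₁ τ₂ _ _ ih1 ih2 ξ Δ hξ; simp only [renameC]; exact TC.letP (ih1 _ _ hξ) (ih2 _ _ hξ.lift)
  case letIp => intro Γ c₁ c₂ τ₁ τ₂ ρ₁ ρ₁' ρ₂ _ _ ih1 ih2 ξ Δ hξ; simp only [renameC]; exact TC.letIp (ih1 _ _ hξ) (ih2 _ _ hξ.lift)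
  case op => intro Γ o v _ ih ξ Δ hξ; simp only [renameC]; exact TC.op (ih _ _ hξ)
  case handle => intro Γ r ops c τ ρ ρ' _ _ _ ihops ihr ihc ξ Δ hξ; simp only [renameC]; exact TC.handle (fun o => ihops o _ _ hξ.lift.lift) (ihr _ _ hξ.lift) (ihc _ _ hξ)
  case csub => intro Γ c ρ ρ' _ s ih ξ Δ hξ; exact TC.csub (ih _ _ hξ) s

theorem tc_rename {S Γ c ρ} (h : TC S Γ c ρ) :
    ∀ ξ Δ, RnOK ξ Γ Δ → TC S Δ (renameC ξ c) ρ := by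
  refine TC.rec (motive_1 := fun Γ v τ _ => ∀ ξ Δ, RnOK ξ Γ Δ → TV S Δ (renameV ξ v) τ)
    (motive_2 := fun Γ c ρ _ => ∀ ξ Δ, RnOK ξ Γ Δ → TC S Δ (renameC ξ c) ρ)
    ?unit ?tt ?ff ?var ?lam ?fix ?vsub ?ret ?app ?ite ?letP ?letIp ?op ?handle ?csub h
  case unit => intro Γ ξ Δ hξ; simp only [renameV]; exact TV.unit
  case tt => intro Γ ξ Δ hξ; simp only [renameV]; exact TV.tt
  case ff => intro Γ ξ Δ hξ; simp only [renameV]; exact TV.ff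
  case var => intro Γ n τ hn ξ Δ hξ; simp only [renameV]; exact TV.var (hξ _ _ hn)
  case lam => intro Γ τ c ρ _ ih ξ Δ hξ; simp only [renameV]; exact TV.lam (ih _ _ hξ.lift)
  case fix => intro Γ τ v _ ih ξ Δ hξ; simp only [renameV]; exact TV.fix (ih _ _ hξ.lift)
  case vsub => intro Γ v τ τ' _ s ih ξ Δ hξ; exact TV.vsub (ih _ _ hξ) s
  case ret => intro Γ v τ _ ih ξ Δ hξ; simp only [renameC]; exact TC.ret (ih _ _ hξ)
  case app => intro Γ v₁ v₂ τ ρ _ _ ih1 ih2 ξ Δ hξ; simp only [renameC]; exact TC.app (ih1 _ _ hξ) (ih2 _ _ hξ)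
  case ite => intro Γ v c₁ c₂ ρ _ _ _ ihv ih1 ih2 ξ Δ hξ; simp only [renameC]; exact TC.ite (ihv _ _ hξ) (ih1 _ _ hξ) (ih2 _ _ hξ)
  case letP => intro Γ c₁ c₂ τ₁ τ₂ _ _ ih1 ih2 ξ Δ hξ; simp only [renameC]; exact TC.letP (ih1 _ _ hξ) (ih2 _ _ hξ.lift)
  case letIp => intro Γ c₁ c₂ τ₁ τ₂ ρ₁ ρ₁' ρ₂ _ _ ih1 ih2 ξ Δ hξ; simp only [renameC]; exact TC.letIp (ih1 _ _ hξ) (ih2 _ _ hξ.lift)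
  case op => intro Γ o v _ ih ξ Δ hξ; simp only [renameC]; exact TC.op (ih _ _ hξ)
  case handle => intro Γ r ops c τ ρ ρ' _ _ _ ihops ihr ihc ξ Δ hξ; simp only [renameC]; exact TC.handle (fun o => ihops o _ _ hξ.lift.lift) (ihr _ _ hξ.lift) (ihc _ _ hξ)
  case csub => intro Γ c ρ ρ' _ s ih ξ Δ hξ; exact TC.csub (ih _ _ hξ) s

def SbOK (S : Sig) (σ : ℕ → Val) (Γ Δ : List VTy) : Prop :=
  ∀ n τ, Γ[n]? = some τ → TV S Δ (σ n) τ

theorem SbOK.lift {S σ Γ Δ τ} (h : SbOK S σ Γ Δ) : SbOK S (liftS σ) (τ::Γ) (τ::Δ) := by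
  intro n σ' hn
  cases n with
  | zero =>
    simp at hn
    cases hn
    exact TV.var (by simp [liftS])
  | succ n =>
    simp only [liftS]
    exact tv_rename (h n σ' (by simpa using hn)) _ _ RnOK.succ

theorem tv_subst {S Γ v τ} (h : TV S Γ v τ) :
    ∀ σ Δ, SbOK S σ Γ Δ → TV S Δ (substV σ v) τ := by
  refine TV.rec (motive_1 := fun Γ v τ _ => ∀ σ Δ, SbOK S σ Γ Δ → TV S Δ (substV σ v) τ)
    (motive_2 := fun Γ c ρ _ => ∀ σ Δ, SbOK S σ Γ Δ → TC S Δ (substC σ c) ρ)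
    ?unit ?tt ?ff ?var ?lam ?fix ?vsub ?ret ?app ?ite ?letP ?letIp ?op ?handle ?csub h
  case unit => intro Γ σ Δ hσ; simp only [substV]; exact TV.unit
  case tt => intro Γ σ Δ hσ; simp only [substV]; exact TV.tt
  case ff => intro Γ σ Δ hσ; simp only [substV]; exact TV.ff
  case var => intro Γ n τ hn σ Δ hσ; simp only [substV]; exact hσ _ _ hn
  case lam => intro Γ τ c ρ _ ih σ Δ hσ; simp only [substV]; exact TV.lam (ih _ _ hσ.lift)
  case fix => intro Γ τ v _ ih σ Δ hσ; simp only [substV]; exact TV.fix (ih _ _ hσ.lift)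
  case vsub => intro Γ v τ τ' _ s ih σ Δ hσ; exact TV.vsub (ih _ _ hσ) s
  case ret => intro Γ v τ _ ih σ Δ hσ; simp only [substC]; exact TC.ret (ih _ _ hσ)
  case app => intro Γ v₁ v₂ τ ρ _ _ ih1 ih2 σ Δ hσ; simp only [substC]; exact TC.app (ih1 _ _ hσ) (ih2 _ _ hσ)
  case ite => intro Γ v c₁ c₂ ρ _ _ _ ihv ih1 ih2 σ Δ hσ; simp only [substC]; exact TC.ite (ihv _ _ hσ) (ih1 _ _ hσ) (ih2 _ _ hσ)
  case letP => intro Γ c₁ c₂ τ₁ τ₂ _ _ ih1 ih2 σ Δ hσ; simp only [substC]; exact TC.letP (ih1 _ _ hσ) (ih2 _ _ hσ.lift)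
  case letIp => intro Γ c₁ c₂ τ₁ τ₂ ρ₁ ρ₁' ρ₂ _ _ ih1 ih2 σ Δ hσ; simp only [substC]; exact TC.letIp (ih1 _ _ hσ) (ih2 _ _ hσ.lift)
  case op => intro Γ o v _ ih σ Δ hσ; simp only [substC]; exact TC.op (ih _ _ hσ)
  case handle => intro Γ r ops c τ ρ ρ' _ _ _ ihops ihr ihc σ Δ hσ; simp only [substC]; exact TC.handle (fun o => ihops o _ _ hσ.lift.lift) (ihr _ _ hσ.lift) (ihc _ _ hσ)
  case csub => intro Γ c ρ ρ' _ s ih σ Δ hσ; exact TC.csub (ih _ _ hσ) s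

theorem tc_subst {S Γ c ρ} (h : TC S Γ c ρ) :
    ∀ σ Δ, SbOK S σ Γ Δ → TC S Δ (substC σ c) ρ := by
  refine TC.rec (motive_1 := fun Γ v τ _ => ∀ σ Δ, SbOK S σ Γ Δ → TV S Δ (substV σ v) τ)
    (motive_2 := fun Γ c ρ _ => ∀ σ Δ, SbOK S σ Γ Δ → TC S Δ (substC σ c) ρ)
    ?unit ?tt ?ff ?var ?lam ?fix ?vsub ?ret ?app ?ite ?letP ?letIp ?op ?handle ?csub h
  case unit => intro Γ σ Δ hσ; simp only [substV]; exact TV.unit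
  case tt => intro Γ σ Δ hσ; simp only [substV]; exact TV.tt
  case ff => intro Γ σ Δ hσ; simp only [substV]; exact TV.ff
  case var => intro Γ n τ hn σ Δ hσ; simp only [substV]; exact hσ _ _ hn
  case lam => intro Γ τ c ρ _ ih σ Δ hσ; simp only [substV]; exact TV.lam (ih _ _ hσ.lift)
  case fix => intro Γ τ v _ ih σ Δ hσ; simp only [substV]; exact TV.fix (ih _ _ hσ.lift)
  case vsub => intro Γ v τ τ' _ s ih σ Δ hσ; exact TV.vsub (ih _ _ hσ) s
  case ret => intro Γ v τ _ ih σ Δ hσ; simp only [substC]; exact TC.ret (ih _ _ hσ)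
  case app => intro Γ v₁ v₂ τ ρ _ _ ih1 ih2 σ Δ hσ; simp only [substC]; exact TC.app (ih1 _ _ hσ) (ih2 _ _ hσ)
  case ite => intro Γ v c₁ c₂ ρ _ _ _ ihv ih1 ih2 σ Δ hσ; simp only [substC]; exact TC.ite (ihv _ _ hσ) (ih1 _ _ hσ) (ih2 _ _ hσ)
  case letP => intro Γ c₁ c₂ τ₁ τ₂ _ _ ih1 ih2 σ Δ hσ; simp only [substC]; exact TC.letP (ih1 _ _ hσ) (ih2 _ _ hσ.lift)
  case letIp => intro Γ c₁ c₂ τ₁ τ₂ ρ₁ ρ₁' ρ₂ _ _ ih1 ih2 σ Δ hσ; simp only [substC]; exact TC.letIp (ih1 _ _ hσ) (ih2 _ _ hσ.lift)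
  case op => intro Γ o v _ ih σ Δ hσ; simp only [substC]; exact TC.op (ih _ _ hσ)
  case handle => intro Γ r ops c τ ρ ρ' _ _ _ ihops ihr ihc σ Δ hσ; simp only [substC]; exact TC.handle (fun o => ihops o _ _ hσ.lift.lift) (ihr _ _ hσ.lift) (ihc _ _ hσ)
  case csub => intro Γ c ρ ρ' _ s ih σ Δ hσ; exact TC.csub (ih _ _ hσ) s

/-! ### Inversion lemmas -/

theorem inv_ret {S Γ v ρc} (h : TC S Γ (.ret v) ρc) :
    ∃ τ, TV S Γ v τ ∧ SubC (.pure τ) ρc := by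
  refine TC.rec (motive_1 := fun _ _ _ _ => True)
    (motive_2 := fun Γ c ρ _ => ∀ v', c = .ret v' → ∃ τ, TV S Γ v' τ ∧ SubC (.pure τ) ρ)
    ?unit ?tt ?ff ?var ?lam ?fix ?vsub ?ret ?app ?ite ?letP ?letIp ?op ?handle ?csub h v rfl
  case ret =>
    intro Γ v τ h1 _ v' hh; injection hh with hh; subst hh; exact ⟨τ, h1, subC_refl _⟩
  case csub =>
    intro Γ c ρ ρ' _ s ih v' hh
    obtain ⟨τ, a, b⟩ := ih v' hh
    exact ⟨τ, a, subC_trans b s⟩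
  all_goals intros
  all_goals simp_all

theorem inv_op {S Γ o v ρc} (h : TC S Γ (.op o v) ρc) :
    TV S Γ v (S.arg o) ∧ SubC (.eff (S.res o) (S.ans1 o) (S.ans2 o)) ρc := by
  refine TC.rec (motive_1 := fun _ _ _ _ => True)
    (motive_2 := fun Γ c ρ _ => ∀ o' v', c = .op o' v' →
      TV S Γ v' (S.arg o') ∧ SubC (.eff (S.res o') (S.ans1 o') (S.ans2 o')) ρ)
    ?unit ?tt ?ff ?var ?lam ?fix ?vsub ?ret ?app ?ite ?letP ?letIp ?op ?handle ?csub h o v rfl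
  case op =>
    intro Γ o v h1 _ o' v' hh; injection hh with e1 e2; subst e1; subst e2
    exact ⟨h1, subC_refl _⟩
  case csub =>
    intro Γ c ρ ρ' _ s ih o' v' hh
    obtain ⟨a, b⟩ := ih o' v' hh
    exact ⟨a, subC_trans b s⟩
  all_goals intros
  all_goals simp_all

theorem inv_app {S Γ v₁ v₂ ρc} (h : TC S Γ (.app v₁ v₂) ρc) :
    ∃ τ ρ, TV S Γ v₁ (.arrow τ ρ) ∧ TV S Γ v₂ τ ∧ SubC ρ ρc := by
  refine TC.rec (motive_1 := fun _ _ _ _ => True)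
    (motive_2 := fun Γ c ρc _ => ∀ a b, c = .app a b →
      ∃ τ ρ, TV S Γ a (.arrow τ ρ) ∧ TV S Γ b τ ∧ SubC ρ ρc)
    ?unit ?tt ?ff ?var ?lam ?fix ?vsub ?ret ?app ?ite ?letP ?letIp ?op ?handle ?csub h v₁ v₂ rfl
  case app =>
    intro Γ v₁ v₂ τ ρ h1 h2 _ _ a b hh; injection hh with e1 e2; subst e1; subst e2
    exact ⟨τ, ρ, h1, h2, subC_refl _⟩
  case csub =>
    intro Γ c ρ ρ' _ s ih a b hh
    obtain ⟨τ, ρ₀, x, y, z⟩ := ih a b hh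
    exact ⟨τ, ρ₀, x, y, subC_trans z s⟩
  all_goals intros
  all_goals simp_all

theorem inv_ite {S Γ v c₁ c₂ ρc} (h : TC S Γ (.ite v c₁ c₂) ρc) :
    TV S Γ v .bool ∧ TC S Γ c₁ ρc ∧ TC S Γ c₂ ρc := by
  refine TC.rec (motive_1 := fun _ _ _ _ => True)
    (motive_2 := fun Γ c ρc _ => ∀ a b₁ b₂, c = .ite a b₁ b₂ →
      TV S Γ a .bool ∧ TC S Γ b₁ ρc ∧ TC S Γ b₂ ρc)
    ?unit ?tt ?ff ?var ?lam ?fix ?vsub ?ret ?app ?ite ?letP ?letIp ?op ?handle ?csub h v c₁ c₂ rfl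
  case ite =>
    intro Γ v c₁ c₂ ρ hv h1 h2 _ _ _ a b₁ b₂ hh
    injection hh with e1 e2 e3; subst e1; subst e2; subst e3
    exact ⟨hv, h1, h2⟩
  case csub =>
    intro Γ c ρ ρ' _ s ih a b₁ b₂ hh
    obtain ⟨x, y, z⟩ := ih a b₁ b₂ hh
    exact ⟨x, .csub y s, .csub z s⟩
  all_goals intros
  all_goals simp_all

theorem inv_letin {S Γ c₁ c₂ ρc} (h : TC S Γ (.letin c₁ c₂) ρc) :
    (∃ τ₁ τ₂, TC S Γ c₁ (.pure τ₁) ∧ TC S (τ₁::Γ) c₂ (.pure τ₂) ∧ SubC (.pure τ₂) ρc) ∨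
    (∃ τ₁ τ₂ ρ₁ ρ₁' ρ₂, TC S Γ c₁ (.eff τ₁ ρ₁ ρ₁') ∧ TC S (τ₁::Γ) c₂ (.eff τ₂ ρ₂ ρ₁) ∧
      SubC (.eff τ₂ ρ₂ ρ₁') ρc) := by
  refine TC.rec (motive_1 := fun _ _ _ _ => True)
    (motive_2 := fun Γ c ρc _ => ∀ a b, c = .letin a b →
      (∃ τ₁ τ₂, TC S Γ a (.pure τ₁) ∧ TC S (τ₁::Γ) b (.pure τ₂) ∧ SubC (.pure τ₂) ρc) ∨
      (∃ τ₁ τ₂ ρ₁ ρ₁' ρ₂, TC S Γ a (.eff τ₁ ρ₁ ρ₁') ∧ TC S (τ₁::Γ) b (.eff τ₂ ρ₂ ρ₁) ∧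
        SubC (.eff τ₂ ρ₂ ρ₁') ρc))
    ?unit ?tt ?ff ?var ?lam ?fix ?vsub ?ret ?app ?ite ?letP ?letIp ?op ?handle ?csub h c₁ c₂ rfl
  case letP =>
    intro Γ c₁ c₂ τ₁ τ₂ h1 h2 _ _ a b hh; injection hh with e1 e2; subst e1; subst e2
    exact Or.inl ⟨τ₁, τ₂, h1, h2, subC_refl _⟩
  case letIp =>
    intro Γ c₁ c₂ τ₁ τ₂ ρ₁ ρ₁' ρ₂ h1 h2 _ _ a b hh; injection hh with e1 e2; subst e1; subst e2
    exact Or.inr ⟨τ₁, τ₂, ρ₁, ρ₁', ρ₂, h1, h2, subC_refl _⟩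
  case csub =>
    intro Γ c ρ ρ' _ s ih a b hh
    rcases ih a b hh with ⟨τ₁, τ₂, x, y, z⟩ | ⟨τ₁, τ₂, ρ₁, ρ₁', ρ₂, x, y, z⟩
    · exact Or.inl ⟨τ₁, τ₂, x, y, subC_trans z s⟩
    · exact Or.inr ⟨τ₁, τ₂, ρ₁, ρ₁', ρ₂, x, y, subC_trans z s⟩
  all_goals intros
  all_goals simp_all

theorem inv_handle {S Γ r ops c ρc} (h : TC S Γ (.handle r ops c) ρc) :
    ∃ τ ρ ρ', (∀ o, TC S (.arrow (S.res o) (S.ans1 o) :: S.arg o :: Γ) (ops o) (S.ans2 o)) ∧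
      TC S (τ::Γ) r ρ ∧ TC S Γ c (.eff τ ρ ρ') ∧ SubC ρ' ρc := by
  refine TC.rec (motive_1 := fun _ _ _ _ => True)
    (motive_2 := fun Γ cc ρc _ => ∀ a b d, cc = .handle a b d →
      ∃ τ ρ ρ', (∀ o, TC S (.arrow (S.res o) (S.ans1 o) :: S.arg o :: Γ) (b o) (S.ans2 o)) ∧
        TC S (τ::Γ) a ρ ∧ TC S Γ d (.eff τ ρ ρ') ∧ SubC ρ' ρc)
    ?unit ?tt ?ff ?var ?lam ?fix ?vsub ?ret ?app ?ite ?letP ?letIp ?op ?handle ?csub h r ops c rfl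
  case handle =>
    intro Γ r ops c τ ρ ρ' hops hr hc _ _ _ a b d hh
    injection hh with e1 e2 e3; subst e1; subst e2; subst e3
    exact ⟨τ, ρ, ρ', hops, hr, hc, subC_refl _⟩
  case csub =>
    intro Γ c ρ ρ' _ s ih a b d hh
    obtain ⟨τ, ρ₀, ρ₀', x, y, z, w⟩ := ih a b d hh
    exact ⟨τ, ρ₀, ρ₀', x, y, z, subC_trans w s⟩
  all_goals intros
  all_goals simp_all

theorem inv_proj {S Γ v l ρc} (h : TC S Γ (.proj v l) ρc) : False := by
  refine TC.rec (motive_1 := fun _ _ _ _ => True)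
    (motive_2 := fun Γ c ρ _ => ∀ a b, c = .proj a b → False)
    ?unit ?tt ?ff ?var ?lam ?fix ?vsub ?ret ?app ?ite ?letP ?letIp ?op ?handle ?csub h v l rfl
  case csub => intro Γ c ρ ρ' _ s ih a b hh; exact ih a b hh
  all_goals intros
  all_goals simp_all

theorem inv_lam {S Γ c τs} (h : TV S Γ (.lam c) τs) :
    ∃ τ ρ, TC S (τ::Γ) c ρ ∧ SubV (.arrow τ ρ) τs := by
  refine TV.rec (motive_2 := fun _ _ _ _ => True)
    (motive_1 := fun Γ v τs _ => ∀ c', v = .lam c' →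
      ∃ τ ρ, TC S (τ::Γ) c' ρ ∧ SubV (.arrow τ ρ) τs)
    ?unit ?tt ?ff ?var ?lam ?fix ?vsub ?ret ?app ?ite ?letP ?letIp ?op ?handle ?csub h c rfl
  case lam =>
    intro Γ τ c ρ h1 _ c' hh; injection hh with e; subst e
    exact ⟨τ, ρ, h1, subV_refl _⟩
  case vsub =>
    intro Γ v τ τ' _ s ih c' hh
    obtain ⟨a, b, x, y⟩ := ih c' hh
    exact ⟨a, b, x, subV_trans y s⟩
  all_goals intros
  all_goals simp_all

theorem inv_fix {S Γ v τs} (h : TV S Γ (.fix v) τs) :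
    ∃ τ, TV S (τ::Γ) v τ ∧ SubV τ τs := by
  refine TV.rec (motive_2 := fun _ _ _ _ => True)
    (motive_1 := fun Γ w τs _ => ∀ v', w = .fix v' →
      ∃ τ, TV S (τ::Γ) v' τ ∧ SubV τ τs)
    ?unit ?tt ?ff ?var ?lam ?fix ?vsub ?ret ?app ?ite ?letP ?letIp ?op ?handle ?csub h v rfl
  case fix =>
    intro Γ τ v h1 _ v' hh; injection hh with e; subst e
    exact ⟨τ, h1, subV_refl _⟩
  case vsub =>
    intro Γ v τ τ' _ s ih v' hh
    obtain ⟨a, x, y⟩ := ih v' hh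
    exact ⟨a, x, subV_trans y s⟩
  all_goals intros
  all_goals simp_all

/-! ### Substitution helpers -/

theorem sbok_sub1 {S Γ v τ} (hv : TV S Γ v τ) : SbOK S (sub1 v) (τ::Γ) Γ := by
  intro n σ hn
  cases n with
  | zero => simp at hn; cases hn; simpa [sub1] using hv
  | succ n => simp only [sub1]; exact .var (by simpa using hn)

theorem sbok_sub2 {S Γ x k τx τk} (hx : TV S Γ x τx) (hk : TV S Γ k τk) :
    SbOK S (sub2 x k) (τk :: τx :: Γ) Γ := by
  intro n σ hn
  match n with
  | 0 => simp at hn; cases hn; simpa [sub2] using hk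
  | 1 => simp at hn; cases hn; simpa [sub2] using hx
  | (m+2) => simp only [sub2]; exact .var (by simpa using hn)

/-! ### Typing of operations under evaluation contexts -/

theorem plug_op_not_pure {S o v} (E : EC) : ∀ {Γ τ}, ¬ TC S Γ (plug E (.op o v)) (.pure τ) := by
  induction E with
  | hole =>
    intro Γ τ h
    simp only [plug] at h
    obtain ⟨_, s⟩ := inv_op h
    cases s
  | letE E c₂ ih =>
    intro Γ τ h
    simp only [plug] at h
    rcases inv_letin h with ⟨_, _, h1, _, _⟩ | ⟨_, _, _, _, _, _, _, s⟩
    · exact ih h1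
    · cases s

theorem plug_op_inv {S o v} (E : EC) : ∀ {Γ τ ρ ρ'},
    TC S Γ (plug E (.op o v)) (.eff τ ρ ρ') →
    TV S Γ v (S.arg o) ∧ SubC (S.ans2 o) ρ' ∧
      TC S (S.res o :: Γ) (plug (renameE Nat.succ E) (.ret (.var 0))) (.eff τ ρ (S.ans1 o)) := by
  induction E with
  | hole =>
    intro Γ τ ρ ρ' h
    simp only [plug] at h
    obtain ⟨hv, s⟩ := inv_op h
    cases s with
    | ipure d e f =>
      refine ⟨hv, f, ?_⟩
      simp only [renameE, plug]
      exact .csub (.ret (.var (by simp))) (.embed d e)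
  | letE E c₂ ih =>
    intro Γ τ ρ ρ' h
    simp only [plug] at h
    rcases inv_letin h with ⟨_, _, h1, _, _⟩ | ⟨τ₁, τ₂, ρ₁, ρ₁', ρ₂, h1, h2, s⟩
    · exact absurd h1 (plug_op_not_pure E)
    · cases s with
      | ipure d e f =>
        obtain ⟨hv, f₁, K⟩ := ih h1
        refine ⟨hv, subC_trans f₁ f, ?_⟩
        simp only [renameE, plug]
        exact .csub (.letIp K (tc_rename h2 _ _ (RnOK.succ.lift)))
          (.ipure d e (subC_refl _))

/-- Preservation (subject reduction) for the ATM type system. -/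
theorem atm_preservation (S : Sig) (Γ : List VTy) (c c' : Comp) (ρ : CTy)
    (h : TC S Γ c ρ) (hs : Step c c') : TC S Γ c' ρ := by
  revert h
  induction hs generalizing ρ with
  | letc hstep ih =>
    intro h
    rcases inv_letin h with ⟨τ₁, τ₂, h1, h2, s⟩ | ⟨τ₁, τ₂, ρ₁, ρ₁', ρ₂, h1, h2, s⟩
    · exact .csub (.letP (ih _ h1) h2) s
    · exact .csub (.letIp (ih _ h1) h2) s
  | letret =>
    intro h
    rcases inv_letin h with ⟨τ₁, τ₂, h1, h2, s⟩ | ⟨τ₁, τ₂, ρ₁, ρ₁', ρ₂, h1, h2, s⟩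
    · obtain ⟨τv, hv, sv⟩ := inv_ret h1
      cases sv with
      | pure d => exact .csub (tc_subst h2 _ _ (sbok_sub1 (.vsub hv d))) s
    · obtain ⟨τv, hv, sv⟩ := inv_ret h1
      cases sv with
      | embed d e =>
        exact .csub (.csub (tc_subst h2 _ _ (sbok_sub1 (.vsub hv d)))
          (.ipure (subV_refl _) (subC_refl _) e)) s
  | lamapp =>
    intro h
    obtain ⟨τa, ρa, h1, h2, s⟩ := inv_app h
    obtain ⟨τ, ρ₀, hc, sv⟩ := inv_lam h1
    cases sv with
    | arrow d e =>
      exact .csub (.csub (tc_subst hc _ _ (sbok_sub1 (.vsub h2 d))) e) s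
  | fixapp =>
    intro h
    obtain ⟨τa, ρa, h1, h2, s⟩ := inv_app h
    obtain ⟨τ₀, hv, sv⟩ := inv_fix h1
    exact .csub (.app (.vsub (tv_subst hv _ _ (sbok_sub1 (.fix hv))) sv) h2) s
  | iftrue => intro h; exact (inv_ite h).2.1
  | iffalse => intro h; exact (inv_ite h).2.2
  | han hstep ih =>
    intro h
    obtain ⟨τ, ρ₀, ρ'', hops, hr, hc, s⟩ := inv_handle h
    exact .csub (.handle hops hr (ih _ hc)) s
  | hret =>
    intro h
    obtain ⟨τ, ρ₀, ρ'', hops, hr, hc, s⟩ := inv_handle h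
    obtain ⟨τv, hv, sv⟩ := inv_ret hc
    cases sv with
    | embed d e =>
      exact .csub (tc_subst hr _ _ (sbok_sub1 (.vsub hv d))) (subC_trans e s)
  | @hop r ops E o v =>
    intro h
    obtain ⟨τ, ρ₀, ρ'', hops, hr, hc, s⟩ := inv_handle h
    obtain ⟨hv, f, K⟩ := plug_op_inv E hc
    have hk : TV S Γ (contOf r ops E) (.arrow (S.res o) (S.ans1 o)) :=
      .lam (.handle (fun o' => tc_rename (hops o') _ _ (RnOK.succ.lift.lift))
        (tc_rename hr _ _ RnOK.succ.lift) K)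
    exact .csub (tc_subst (hops o) _ _ (sbok_sub2 hv hk)) (subC_trans f s)
  | projr =>
    intro h
    exact (inv_proj h).elim

end LEH
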